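/- Let N = 3 and θ = (0, π/4, π/2). Then θ is a critical point of V (all three partial derivatives of V vanish at θ), and the Hessian of V at θ has eigenvalues 0, 2 + √2, and 3 + 3√2; in particular the Hessian is positive semidefinite with one-dimensional kernel spanned by (1,1,1), so θ is a nondegenerate local minimum of V. -/

import Mathlib

open Real Finset Matrix

/-- The limit potential of the (1+N)-vortex problem:
`V(θ) = -∑_{i<j} (cos(θᵢ-θⱼ) + (1/2)·log(2 - 2cos(θᵢ-θⱼ)))`. -/
noncomputable def vortexPotential (N : ℕ) (θ : Fin N → ℝ) : ℝ :=
  - ∑ i : Fin N, ∑ j : Fin N,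
      if i < j then
        Real.cos (θ i - θ j) + (1 / 2) * Real.log (2 - 2 * Real.cos (θ i - θ j))
      else 0

/-- The Hessian matrix of the potential `V` at `θ`. -/
noncomputable def vortexHessian (N : ℕ) (θ : Fin N → ℝ) : Matrix (Fin N) (Fin N) ℝ :=
  fun i j => iteratedFDeriv ℝ 2 (vortexPotential N) θ ![Pi.single i 1, Pi.single j 1]

/-! ### Auxiliary scalar functions -/

noncomputable def phi (t : ℝ) : ℝ := -(Real.cos t + (1/2) * Real.log (2 - 2 * Real.cos t))
noncomputable def phid (t : ℝ) : ℝ := Real.sin t - Real.sin t / (2 - 2 * Real.cos t)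
noncomputable def phidd (t : ℝ) : ℝ := Real.cos t + 1 / (2 - 2 * Real.cos t)

lemma denom_pos {t : ℝ} (h : Real.cos t ≠ 1) : 0 < 2 - 2 * Real.cos t := by
  have := lt_of_le_of_ne (Real.cos_le_one t) h
  linarith

lemma vortexPotential_three (θ : Fin 3 → ℝ) :
    vortexPotential 3 θ = phi (θ 0 - θ 1) + phi (θ 0 - θ 2) + phi (θ 1 - θ 2) := by
  simp only [vortexPotential, phi, Fin.sum_univ_three]
  norm_num [show ¬((1:Fin 3) < 0) from by decide, show ¬((2:Fin 3) < 0) from by decide,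
    show ¬((2:Fin 3) < 1) from by decide, show ((0:Fin 3) < 1) from by decide,
    show ((0:Fin 3) < 2) from by decide, show ((1:Fin 3) < 2) from by decide]
  ring

lemma hasDerivAt_phi {t : ℝ} (h : Real.cos t ≠ 1) : HasDerivAt phi (phid t) t := by
  have hd := denom_pos h
  have h1 : HasDerivAt (fun t => 2 - 2 * Real.cos t) (2 * Real.sin t) t := by
    simpa using ((Real.hasDerivAt_cos t).const_mul 2).const_sub 2
  have h2 : HasDerivAt (fun t => Real.log (2 - 2 * Real.cos t))
      (2 * Real.sin t / (2 - 2 * Real.cos t)) t := h1.log hd.ne'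
  have h3 := ((Real.hasDerivAt_cos t).add (h2.const_mul (1/2 : ℝ))).neg
  refine h3.congr_deriv ?_
  unfold phid
  field_simp
  ring

lemma hasDerivAt_phid {t : ℝ} (h : Real.cos t ≠ 1) : HasDerivAt phid (phidd t) t := by
  have hd := denom_pos h
  have h1 : HasDerivAt (fun t => 2 - 2 * Real.cos t) (2 * Real.sin t) t := by
    simpa using ((Real.hasDerivAt_cos t).const_mul 2).const_sub 2
  have h2 : HasDerivAt (fun t => Real.sin t / (2 - 2 * Real.cos t))
      ((Real.cos t * (2 - 2 * Real.cos t) - Real.sin t * (2 * Real.sin t)) /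
        (2 - 2 * Real.cos t)^2) t := (Real.hasDerivAt_sin t).div h1 hd.ne'
  have h3 := (Real.hasDerivAt_sin t).sub h2
  refine h3.congr_deriv ?_
  unfold phidd
  have hs := Real.sin_sq_add_cos_sq t
  field_simp
  nlinarith [hs]

/-! ### Linear maps and derivatives of the potential -/

noncomputable def Lij (i j : Fin 3) : (Fin 3 → ℝ) →L[ℝ] ℝ :=
  ContinuousLinearMap.proj (R := ℝ) (φ := fun _ : Fin 3 => ℝ) i
    - ContinuousLinearMap.proj (R := ℝ) (φ := fun _ : Fin 3 => ℝ) j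

@[simp] lemma Lij_apply (i j : Fin 3) (θ : Fin 3 → ℝ) : Lij i j θ = θ i - θ j := by
  simp [Lij]

lemma Lij_coe (i j : Fin 3) : ⇑(Lij i j) = fun θ : Fin 3 → ℝ => θ i - θ j := by
  funext θ; simp

lemma hasFDerivAt_Lij (i j : Fin 3) (θ : Fin 3 → ℝ) :
    HasFDerivAt (fun θ : Fin 3 → ℝ => θ i - θ j) (Lij i j) θ :=
  Lij_coe i j ▸ (Lij i j).hasFDerivAt

noncomputable def Dmap (θ : Fin 3 → ℝ) : (Fin 3 → ℝ) →L[ℝ] ℝ :=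
  phid (θ 0 - θ 1) • Lij 0 1 + phid (θ 0 - θ 2) • Lij 0 2 + phid (θ 1 - θ 2) • Lij 1 2

noncomputable def D2map (θ : Fin 3 → ℝ) : (Fin 3 → ℝ) →L[ℝ] ((Fin 3 → ℝ) →L[ℝ] ℝ) :=
  (phidd (θ 0 - θ 1) • Lij 0 1).smulRight (Lij 0 1)
  + (phidd (θ 0 - θ 2) • Lij 0 2).smulRight (Lij 0 2)
  + (phidd (θ 1 - θ 2) • Lij 1 2).smulRight (Lij 1 2)

def Ugood : Set (Fin 3 → ℝ) :=
  {θ | Real.cos (θ 0 - θ 1) ≠ 1 ∧ Real.cos (θ 0 - θ 2) ≠ 1 ∧ Real.cos (θ 1 - θ 2) ≠ 1}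

lemma isOpen_Ugood : IsOpen Ugood := by
  have hc : ∀ i j : Fin 3, Continuous (fun θ : Fin 3 → ℝ => Real.cos (θ i - θ j)) :=
    fun i j => Real.continuous_cos.comp ((continuous_apply i).sub (continuous_apply j))
  exact (((isOpen_ne).preimage (hc 0 1)).inter
    (((isOpen_ne).preimage (hc 0 2)).inter ((isOpen_ne).preimage (hc 1 2))))

lemma hasFDerivAt_term {θ : Fin 3 → ℝ} (i j : Fin 3) (h : Real.cos (θ i - θ j) ≠ 1) :
    HasFDerivAt (fun θ : Fin 3 → ℝ => phi (θ i - θ j)) (phid (θ i - θ j) • Lij i j) θ :=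
  (hasDerivAt_phi h).comp_hasFDerivAt (h₂ := phi) θ (hasFDerivAt_Lij i j θ)

lemma hasFDerivAt_termd {θ : Fin 3 → ℝ} (i j : Fin 3) (h : Real.cos (θ i - θ j) ≠ 1) :
    HasFDerivAt (fun θ : Fin 3 → ℝ => phid (θ i - θ j) • Lij i j)
      ((phidd (θ i - θ j) • Lij i j).smulRight (Lij i j)) θ := by
  have hc : HasFDerivAt (fun θ : Fin 3 → ℝ => phid (θ i - θ j))
      (phidd (θ i - θ j) • Lij i j) θ :=
    (hasDerivAt_phid h).comp_hasFDerivAt (h₂ := phid) θ (hasFDerivAt_Lij i j θ)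
  exact hc.smul_const (Lij i j)

lemma hasFDerivAt_V {θ : Fin 3 → ℝ} (h : θ ∈ Ugood) :
    HasFDerivAt (vortexPotential 3) (Dmap θ) θ := by
  obtain ⟨h1, h2, h3⟩ := h
  have hVe : vortexPotential 3 =
      fun θ : Fin 3 → ℝ => phi (θ 0 - θ 1) + phi (θ 0 - θ 2) + phi (θ 1 - θ 2) :=
    funext vortexPotential_three
  rw [hVe]
  exact ((hasFDerivAt_term 0 1 h1).add (hasFDerivAt_term 0 2 h2)).add
    (hasFDerivAt_term 1 2 h3)

lemma hasFDerivAt_Dmap {θ : Fin 3 → ℝ} (h : θ ∈ Ugood) :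
    HasFDerivAt Dmap (D2map θ) θ := by
  obtain ⟨h1, h2, h3⟩ := h
  exact ((hasFDerivAt_termd 0 1 h1).add (hasFDerivAt_termd 0 2 h2)).add
    (hasFDerivAt_termd 1 2 h3)

/-! ### Numeric values -/

lemma sqrt2_sq : Real.sqrt 2 ^ 2 = 2 := Real.sq_sqrt (by norm_num)
lemma sqrt2_nonneg : (0:ℝ) ≤ Real.sqrt 2 := Real.sqrt_nonneg 2
lemma sqrt2_lt_two : Real.sqrt 2 < 2 := by nlinarith [sqrt2_sq, sqrt2_nonneg]
lemma two_sub_sqrt2_ne : (2 : ℝ) - Real.sqrt 2 ≠ 0 := by nlinarith [sqrt2_lt_two]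

lemma cosA : Real.cos (-(π/4)) = Real.sqrt 2 / 2 := by
  rw [Real.cos_neg, Real.cos_pi_div_four]
lemma sinA : Real.sin (-(π/4)) = -(Real.sqrt 2 / 2) := by
  rw [Real.sin_neg, Real.sin_pi_div_four]
lemma cosB : Real.cos (-(π/2)) = 0 := by rw [Real.cos_neg, Real.cos_pi_div_two]
lemma sinB : Real.sin (-(π/2)) = -1 := by rw [Real.sin_neg, Real.sin_pi_div_two]

lemma cosA_ne_one : Real.cos (-(π/4)) ≠ 1 := by
  rw [cosA]; nlinarith [sqrt2_lt_two]
lemma cosB_ne_one : Real.cos (-(π/2)) ≠ 1 := by rw [cosB]; norm_num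

lemma phid_A : phid (-(π/4)) = 1/2 := by
  unfold phid
  rw [cosA, sinA]
  have h := two_sub_sqrt2_ne
  have h2 := sqrt2_sq
  field_simp
  nlinarith [h2]

lemma phid_B : phid (-(π/2)) = -(1/2) := by
  unfold phid; rw [cosB, sinB]; norm_num

lemma phidd_A : phidd (-(π/4)) = 1 + Real.sqrt 2 := by
  unfold phidd
  rw [cosA]
  have h := two_sub_sqrt2_ne
  have h2 := sqrt2_sq
  field_simp
  nlinarith [h2]

lemma phidd_B : phidd (-(π/2)) = 1/2 := by
  unfold phidd; rw [cosB]; norm_num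

/-! ### At the equilibrium point -/

lemma theta0_diff01 : (![0, π / 4, π / 2] : Fin 3 → ℝ) 0 - ![0, π / 4, π / 2] 1 = -(π/4) := by
  simp
lemma theta0_diff02 : (![0, π / 4, π / 2] : Fin 3 → ℝ) 0 - ![0, π / 4, π / 2] 2 = -(π/2) := by
  simp
lemma theta0_diff12 : (![0, π / 4, π / 2] : Fin 3 → ℝ) 1 - ![0, π / 4, π / 2] 2 = -(π/4) := by
  simp; ring

lemma theta0_mem : (![0, π / 4, π / 2] : Fin 3 → ℝ) ∈ Ugood := by
  refine ⟨?_, ?_, ?_⟩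
  · rw [theta0_diff01]; exact cosA_ne_one
  · rw [theta0_diff02]; exact cosB_ne_one
  · rw [theta0_diff12]; exact cosA_ne_one

lemma fderiv_V_theta0 :
    fderiv ℝ (vortexPotential 3) ![0, π / 4, π / 2] = Dmap ![0, π / 4, π / 2] :=
  (hasFDerivAt_V theta0_mem).fderiv

lemma fderiv2_V_theta0 :
    fderiv ℝ (fderiv ℝ (vortexPotential 3)) ![0, π / 4, π / 2] = D2map ![0, π / 4, π / 2] := by
  have hev : fderiv ℝ (vortexPotential 3) =ᶠ[nhds ![0, π / 4, π / 2]] Dmap := by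
    filter_upwards [isOpen_Ugood.mem_nhds theta0_mem] with θ hθ using (hasFDerivAt_V hθ).fderiv
  rw [hev.fderiv_eq]
  exact (hasFDerivAt_Dmap theta0_mem).fderiv

/-- The explicit Hessian matrix. -/
noncomputable def Hmat : Matrix (Fin 3) (Fin 3) ℝ :=
  !![3/2 + Real.sqrt 2, -(1 + Real.sqrt 2), -(1/2);
     -(1 + Real.sqrt 2), 2 + 2 * Real.sqrt 2, -(1 + Real.sqrt 2);
     -(1/2), -(1 + Real.sqrt 2), 3/2 + Real.sqrt 2]

lemma hessian_eq : vortexHessian 3 ![0, π / 4, π / 2] = Hmat := by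
  funext i j
  show iteratedFDeriv ℝ 2 (vortexPotential 3) ![0, π / 4, π / 2]
      ![Pi.single i 1, Pi.single j 1] = Hmat i j
  rw [iteratedFDeriv_two_apply, fderiv2_V_theta0]
  have e01 := theta0_diff01
  have e02 := theta0_diff02
  have e12 := theta0_diff12
  simp only [Matrix.cons_val_zero, Matrix.cons_val_one, Matrix.head_cons]
  simp only [D2map, ContinuousLinearMap.add_apply, ContinuousLinearMap.smulRight_apply,
    ContinuousLinearMap.smul_apply, Lij_apply, smul_eq_mul, e01, e02, e12,
    phidd_A, phidd_B]
  fin_cases i <;> fin_cases j <;>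
    simp [Hmat, Pi.single_apply] <;> ring

/-! ### Linear algebra of the explicit Hessian -/

lemma Hmat_mulVec (v : Fin 3 → ℝ) :
    Hmat.mulVec v = ![(3/2 + Real.sqrt 2) * v 0 - (1 + Real.sqrt 2) * v 1 - (1/2) * v 2,
      -(1 + Real.sqrt 2) * v 0 + (2 + 2*Real.sqrt 2) * v 1 - (1 + Real.sqrt 2) * v 2,
      -(1/2) * v 0 - (1 + Real.sqrt 2) * v 1 + (3/2 + Real.sqrt 2) * v 2] := by
  funext i
  fin_cases i <;>
    simp [Hmat, Matrix.mulVec, dotProduct, Fin.sum_univ_three] <;> ring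

lemma Hmat_kernel (v : Fin 3 → ℝ) :
    Hmat.mulVec v = 0 ↔ ∃ c : ℝ, v = c • ![1, 1, 1] := by
  rw [Hmat_mulVec]
  constructor
  · intro h
    have h0 := congrFun h 0
    have h1 := congrFun h 1
    have h2 := congrFun h 2
    simp at h0 h1 h2
    have r2 := sqrt2_sq
    have rn := sqrt2_nonneg
    have e02 : v 0 = v 2 := by nlinarith [h0, h2]
    have e01 : v 0 = v 1 := by nlinarith [h0, h1, h2]
    refine ⟨v 0, ?_⟩
    funext i; fin_cases i <;> simp [e01, e02] <;> linarith [e01, e02]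
  · rintro ⟨c, rfl⟩
    funext i; fin_cases i <;> simp <;> ring

lemma Hmat_posSemidef : Hmat.PosSemidef := by
  refine posSemidef_iff_dotProduct_mulVec.mpr ⟨?_, ?_⟩
  · show Hmatᴴ = Hmat
    funext i j
    fin_cases i <;> fin_cases j <;>
      simp [Hmat, Matrix.conjTranspose_apply]
  · intro v
    rw [Hmat_mulVec]
    have r2 := sqrt2_sq
    have rn := sqrt2_nonneg
    simp [dotProduct, Fin.sum_univ_three]
    nlinarith [sq_nonneg (v 0 - v 1), sq_nonneg (v 1 - v 2), sq_nonneg (v 0 - v 2), rn,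
      mul_nonneg rn (sq_nonneg (v 0 - v 1)), mul_nonneg rn (sq_nonneg (v 1 - v 2))]

lemma Hmat_eigen (μ : ℝ) :
    (∃ v : Fin 3 → ℝ, v ≠ 0 ∧ Hmat.mulVec v = μ • v) ↔
      (μ = 0 ∨ μ = 2 + Real.sqrt 2 ∨ μ = 3 + 3 * Real.sqrt 2) := by
  have r2 := sqrt2_sq
  have rn := sqrt2_nonneg
  constructor
  · rintro ⟨v, hv, hev⟩
    by_contra hc
    push_neg at hc
    obtain ⟨hμ0, hμ1, hμ2⟩ := hc
    apply hv
    rw [Hmat_mulVec] at hev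
    have h0 := congrFun hev 0
    have h1 := congrFun hev 1
    have h2 := congrFun hev 2
    simp at h0 h1 h2
    -- sum equation: μ * (v0+v1+v2) = 0
    have hs : μ * (v 0 + v 1 + v 2) = 0 := by nlinarith [h0, h1, h2]
    have hs' : v 0 + v 1 + v 2 = 0 := by
      rcases mul_eq_zero.mp hs with h | h
      · exact absurd h hμ0
      · exact h
    have ha : (2 + Real.sqrt 2 - μ) * (v 0 - v 2) = 0 := by nlinarith [h0, h2]
    have ha' : v 0 - v 2 = 0 := by
      rcases mul_eq_zero.mp ha with h | h
      · exact absurd (by linarith) hμ1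
      · exact h
    have hb : (3 + 3 * Real.sqrt 2 - μ) * (v 0 - 2 * v 1 + v 2) = 0 := by
      nlinarith [h0, h1, h2]
    have hb' : v 0 - 2 * v 1 + v 2 = 0 := by
      rcases mul_eq_zero.mp hb with h | h
      · exact absurd (by linarith) hμ2
      · exact h
    funext i; fin_cases i <;> simp <;> linarith
  · rintro (rfl | rfl | rfl)
    · refine ⟨![1, 1, 1], by intro h; simpa using congrFun h 0, ?_⟩
      rw [Hmat_mulVec]; funext i; fin_cases i <;> simp <;> ring
    · refine ⟨![1, 0, -1], by intro h; simpa using congrFun h 0, ?_⟩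
      rw [Hmat_mulVec]; funext i; fin_cases i <;> simp <;> ring
    · refine ⟨![1, -2, 1], by intro h; simpa using congrFun h 0, ?_⟩
      rw [Hmat_mulVec]; funext i; fin_cases i <;> simp <;> ring

lemma Dmap_theta0 (j : Fin 3) : Dmap ![0, π / 4, π / 2] (Pi.single j 1) = 0 := by
  have e01 := theta0_diff01
  have e02 := theta0_diff02
  have e12 := theta0_diff12
  simp only [Dmap, ContinuousLinearMap.add_apply, ContinuousLinearMap.smul_apply,
    Lij_apply, smul_eq_mul, e01, e02, e12, phid_A, phid_B]
  fin_cases j <;> simp [Pi.single_apply] <;> ring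

/-- For `N = 3`, the point `θ = (0, π/4, π/2)` is a critical point of `V`,
and the Hessian of `V` there has eigenvalues `0`, `2 + √2`, `3 + 3√2`; it is positive
semidefinite with one-dimensional kernel spanned by `(1,1,1)`, so `θ` is a nondegenerate
local minimum of `V`. -/
theorem three_vortex_minimum :
    (∀ j : Fin 3, fderiv ℝ (vortexPotential 3) ![0, π / 4, π / 2] (Pi.single j 1) = 0) ∧
    (∀ μ : ℝ, (∃ v : Fin 3 → ℝ, v ≠ 0 ∧
        (vortexHessian 3 ![0, π / 4, π / 2]).mulVec v = μ • v) ↔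
      (μ = 0 ∨ μ = 2 + Real.sqrt 2 ∨ μ = 3 + 3 * Real.sqrt 2)) ∧
    (vortexHessian 3 ![0, π / 4, π / 2]).PosSemidef ∧
    (∀ v : Fin 3 → ℝ, (vortexHessian 3 ![0, π / 4, π / 2]).mulVec v = 0 ↔
      ∃ c : ℝ, v = c • ![1, 1, 1]) := by
  rw [hessian_eq]
  exact ⟨fun j => by rw [fderiv_V_theta0]; exact Dmap_theta0 j,
    Hmat_eigen, Hmat_posSemidef, Hmat_kernel⟩
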